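/- Let d be an odd prime and κ an integer coprime to d with gcd(κ² − 1, d) = 1 such that either κ generates the cyclic group (ℤ/dℤ)ˣ, or d ≡ 3 mod 4 and κ has multiplicative order (d−1)/2 modulo d. Let a, b, c be integers and let g ∈ ℂ^d be a unit vector satisfying g_{κi mod d} = ω^{a·C(i,2)+b·i+c}·g_i for all i = 0,…,d−1. Then the set {|⟨g, M^k T^ℓ g⟩| : (k,ℓ) ∈ (ℤ/dℤ)²} has at most d + 2 elements, and rank(G(g)) ≡ d² mod (d − 1). -/

import Mathlib

open Complex Finset

noncomputable section

/-- `gw d` is the primitive `d`-th root of unity `ω = exp(2πi/d)`. -/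
def gw (d : ℕ) : ℂ := Complex.exp (2 * Real.pi * Complex.I / d)

/-- `modT d k l g = M^k T^ℓ g`, where `(Mg)_n = ω^n g_n` and `(Tg)_n = g_{n-1}`. -/
def modT (d : ℕ) (k l : ZMod d) (g : ZMod d → ℂ) : ZMod d → ℂ :=
  fun n => gw d ^ (k.val * n.val) * g (n - l)

/-- `inn d x y = ⟨x,y⟩ = Σ_n x_n conj(y_n)`. -/
def inn (d : ℕ) [NeZero d] (x y : ZMod d → ℂ) : ℂ :=
  ∑ n : ZMod d, x n * (starRingEnd ℂ) (y n)

/-- The `d² × d²` Gram matrix `G(g)` with entries `|⟨M^k T^ℓ g, M^{k'} T^{ℓ'} g⟩|²`. -/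
def Gmat (d : ℕ) [NeZero d] (g : ZMod d → ℂ) :
    Matrix (ZMod d × ZMod d) (ZMod d × ZMod d) ℂ :=
  fun p q =>
    ((‖inn d (modT d p.1 p.2 g) (modT d q.1 q.2 g)‖ ^ 2 : ℝ) : ℂ)


/-! ### Auxiliary machinery -/

namespace Stmt15Aux

variable {d : ℕ} [NeZero d]

set_option linter.unusedSectionVars false

lemma gw_pow_d : gw d ^ d = 1 := by
  have hd : (d:ℂ) ≠ 0 := Nat.cast_ne_zero.mpr (NeZero.ne d)
  rw [gw, ← Complex.exp_nat_mul]
  rw [show (d:ℂ) * (2 * Real.pi * Complex.I / d) = 2 * Real.pi * Complex.I by field_simp]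
  exact Complex.exp_two_pi_mul_I

lemma gw_prim : IsPrimitiveRoot (gw d) d := Complex.isPrimitiveRoot_exp d (NeZero.ne d)

lemma gw_ne_zero : gw d ≠ 0 := Complex.exp_ne_zero _

lemma gw_pow_mod (m : ℕ) : gw d ^ (m % d) = gw d ^ m := by
  conv_rhs => rw [← Nat.div_add_mod m d, pow_add, pow_mul, gw_pow_d, one_pow, one_mul]

/-- `eef d z = ω^z` for `z : ZMod d`. -/
def eef (d : ℕ) [NeZero d] : ZMod d → ℂ := fun z => gw d ^ z.val

lemma ee_add (x y : ZMod d) : eef d (x + y) = eef d x * eef d y := by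
  rw [eef, eef, eef, ← pow_add, ZMod.val_add, gw_pow_mod]

lemma ee_zero : eef d 0 = 1 := by
  simp [eef, ZMod.val_zero]

lemma abs_gw : ‖gw d‖ = 1 := by
  rw [gw, Complex.norm_exp]
  have : (2 * (Real.pi:ℂ) * Complex.I / d).re = 0 := by
    simp [Complex.div_re]
  rw [this, Real.exp_zero]

lemma abs_ee (x : ZMod d) : ‖eef d x‖ = 1 := by
  rw [eef, norm_pow, abs_gw, one_pow]

lemma ee_mul_ee_neg (x : ZMod d) : eef d x * eef d (-x) = 1 := by
  rw [← ee_add, add_neg_cancel, ee_zero]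

lemma conj_ee (x : ZMod d) : (starRingEnd ℂ) (eef d x) = eef d (-x) := by
  have h1 : eef d x * (starRingEnd ℂ) (eef d x) = 1 := by
    rw [Complex.mul_conj, ← Complex.sq_norm, abs_ee]; norm_num
  have h2 := ee_mul_ee_neg (d := d) x
  have hne : eef d x ≠ 0 := by
    intro h; rw [h] at h1; simp at h1
  have := mul_left_cancel₀ hne (h2.trans h1.symm)
  exact this.symm

lemma star_ee (x : ZMod d) : star (eef d x) = eef d (-x) := conj_ee x

lemma gw_zpow (m : ℤ) : gw d ^ m = eef d (m : ZMod d) := by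
  have hd : 0 < (d:ℤ) := by exact_mod_cast Nat.pos_of_ne_zero (NeZero.ne d)
  conv_lhs => rw [← Int.mul_ediv_add_emod m d, zpow_add₀ gw_ne_zero, zpow_mul]
  rw [show ((d:ℤ)) = ((d:ℕ):ℤ) from rfl, zpow_natCast, gw_pow_d, one_zpow, one_mul]
  have hnn : 0 ≤ m % d := Int.emod_nonneg m hd.ne'
  rw [← Int.toNat_of_nonneg hnn, zpow_natCast, eef]
  congr 1
  have := ZMod.val_intCast (n := d) m
  omega

lemma sum_ee (x : ZMod d) : ∑ n : ZMod d, eef d (n * x) = if x = 0 then (d:ℂ) else 0 := by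
  by_cases hx : x = 0
  · simp [hx, ee_zero, ZMod.card]
  · simp only [hx, if_false]
    have hterm : ∀ n : ZMod d, eef d (n * x) = (eef d x) ^ n.val := by
      intro n
      rw [eef, eef, ← pow_mul, ZMod.val_mul, gw_pow_mod, mul_comm x.val]
    rw [Finset.sum_congr rfl (fun n _ => hterm n)]
    have hbij : ∑ n : ZMod d, (eef d x) ^ n.val = ∑ i ∈ Finset.range d, (eef d x) ^ i := by
      refine Finset.sum_nbij' (fun n : ZMod d => n.val) (fun i : ℕ => (i : ZMod d))
        ?_ ?_ ?_ ?_ ?_ <;> intros <;>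
        simp_all [ZMod.val_lt, ZMod.val_cast_of_lt, ZMod.natCast_val, Finset.mem_range,
          ZMod.val_natCast, Nat.mod_eq_of_lt]
    rw [hbij]
    have hne1 : eef d x ≠ 1 := by
      rw [eef]
      exact (gw_prim (d := d)).pow_ne_one_of_pos_of_lt
        (fun h => hx (by rwa [← ZMod.val_eq_zero])) (ZMod.val_lt x)
    rw [geom_sum_eq hne1]
    have : eef d x ^ d = 1 := by rw [eef, ← pow_mul, mul_comm, pow_mul, gw_pow_d, one_pow]
    rw [this]; simp

/-- The "short-time Fourier" coefficients. -/
def Sf (d : ℕ) [NeZero d] (g : ZMod d → ℂ) (k l : ZMod d) : ℂ :=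
  ∑ n : ZMod d, eef d (-(k*n)) * g n * (starRingEnd ℂ) (g (n - l))

lemma gw_val_mul (k n : ZMod d) : gw d ^ (k.val * n.val) = eef d (k * n) := by
  rw [eef, ZMod.val_mul, gw_pow_mod]

lemma inn_modT (g : ZMod d → ℂ) (k l k' l' : ZMod d) :
    inn d (modT d k l g) (modT d k' l' g)
      = eef d ((k-k')*l) * Sf d g (k'-k) (l'-l) := by
  rw [inn, Sf, Finset.mul_sum]
  rw [← Equiv.sum_comp (Equiv.addRight l) _]
  apply Finset.sum_congr rfl
  intro m _
  simp only [modT, Equiv.coe_addRight, gw_val_mul]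
  rw [map_mul, conj_ee]
  rw [show m + l - l = m by ring, show m + l - l' = m - (l' - l) by ring]
  rw [show k * (m + l) = (k*m + k*l) by ring, show k' * (m + l) = (k'*m + k'*l) by ring,
    show -(k'*m + k'*l) = -(k'*m) + -(k'*l) by ring,
    show ((k-k')*l : ZMod d) = k*l + -(k'*l) by ring,
    show (-((k'-k)*m) : ZMod d) = k*m + -(k'*m) by ring]
  simp only [ee_add]
  ring

lemma inn_g_modT (g : ZMod d → ℂ) (k l : ZMod d) :
    inn d g (modT d k l g) = Sf d g k l := by
  have h := inn_modT g 0 0 k l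
  have hmod : modT d 0 0 g = g := by
    funext n
    simp [modT]
  rw [hmod] at h
  rw [h]
  simp [ee_zero]

lemma Sf_neg (g : ZMod d → ℂ) (k l : ZMod d) :
    ‖Sf d g (-k) (-l)‖ = ‖Sf d g k l‖ := by
  have key : Sf d g (-k) (-l) = (starRingEnd ℂ) (eef d (k*l) * Sf d g k l) := by
    rw [Sf, Sf, map_mul, map_sum, Finset.mul_sum, ← Equiv.sum_comp (Equiv.subRight l) _]
    apply Finset.sum_congr rfl
    intro m _
    simp only [Equiv.subRight_apply, map_mul, conj_ee, Complex.conj_conj, neg_neg]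
    rw [show m - l - -l = m by ring,
      show (-(-k*(m - l)) : ZMod d) = -(k*l) + k*m by ring, ee_add]
    ring
  rw [key, Complex.norm_conj, norm_mul, abs_ee, one_mul]

lemma ee_step (X Y Z C D : ZMod d) (u v : ℂ) (h : X + Y - Z = C + D) :
    eef d X * (eef d Y * u) * (eef d (-Z) * v) = eef d C * (eef d D * u * v) := by
  have l1 : eef d X * eef d Y * eef d (-Z) = eef d (C + D) := by
    rw [← h, show X + Y - Z = X + (Y + -Z) by ring, ee_add, ee_add]; ring
  calc eef d X * (eef d Y * u) * (eef d (-Z) * v)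
      = (eef d X * eef d Y * eef d (-Z)) * (u * v) := by ring
    _ = eef d (C + D) * (u * v) := by rw [l1]
    _ = eef d C * (eef d D * u * v) := by rw [ee_add]; ring

lemma Sf_sym [Fact d.Prime] (g : ZMod d → ℂ) (κc ac bc cc h2 : ZMod d) (hκc : κc ≠ 0)
    (h2h : h2 * 2 = 1)
    (hq : ∀ i, g (κc * i) = eef d (h2 * ac * i * (i-1) + bc * i + cc) * g i)
    (k l : ZMod d) :
    ‖Sf d g k (κc * l)‖ = ‖Sf d g (κc * k - ac * l) l‖ := by
  have key : Sf d g k (κc * l)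
      = eef d (bc*l - h2*ac*(l*l) - h2*ac*l) * Sf d g (κc * k - ac * l) l := by
    rw [Sf, Sf, Finset.mul_sum, ← Equiv.sum_comp (Equiv.mulLeft₀ κc hκc) _]
    apply Finset.sum_congr rfl
    intro m _
    have hcoe : (Equiv.mulLeft₀ κc hκc) m = κc * m := rfl
    rw [hcoe, show κc * m - κc * l = κc * (m - l) by ring, hq m, hq (m - l)]
    rw [map_mul, conj_ee]
    exact ee_step _ _ _ _ _ _ _ (by linear_combination (ac*m*l)*h2h)
  rw [key, norm_mul, abs_ee, one_mul]

/-! ### Group-theoretic machinery -/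

variable {α : Type*}

def invSub (f : ZMod d × ZMod d → α) : Subgroup (ZMod d)ˣ where
  carrier := {v | ∀ u l : ZMod d, f (↑v * u, ↑v⁻¹ * l) = f (u, l)}
  one_mem' := by intro u l; simp
  mul_mem' := by
    intro v w hv hw u l
    have h1 := hv (↑w * u) (↑w⁻¹ * l)
    have h2 := hw u l
    simp only [Units.val_mul, mul_inv_rev, mul_assoc]
    rw [show ((↑w⁻¹ : ZMod d) * ((↑v⁻¹ : ZMod d) * l)) = (↑v⁻¹ : ZMod d) * ((↑w⁻¹ : ZMod d) * l)
      by ring, h1, h2]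
  inv_mem' := by
    intro v hv u l
    have := hv (↑v⁻¹ * u) (↑v * l)
    rw [← mul_assoc, ← mul_assoc, ← Units.val_mul, ← Units.val_mul, mul_inv_cancel,
      inv_mul_cancel, Units.val_one, one_mul, one_mul] at this
    rw [inv_inv, ← this]

lemma mem_invSub {f : ZMod d × ZMod d → α} {v : (ZMod d)ˣ} :
    v ∈ invSub f ↔ ∀ u l : ZMod d, f (↑v * u, ↑v⁻¹ * l) = f (u, l) := Iff.rfl

lemma units_closure_top (hp : d.Prime) (hodd : Odd d) (κu : (ZMod d)ˣ)
    (horder : orderOf κu = d - 1 ∨ (d % 4 = 3 ∧ orderOf κu = (d - 1) / 2)) :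
    Subgroup.closure ({κu, -1} : Set (ZMod d)ˣ) = ⊤ := by
  classical
  haveI : Fact d.Prime := ⟨hp⟩
  have hd3 : 3 ≤ d := by
    rcases hodd with ⟨j, hj⟩
    have := hp.two_le
    omega
  have hd0 : d ≠ 0 := by omega
  set H := Subgroup.closure ({κu, -1} : Set (ZMod d)ˣ) with hH
  have hκH : κu ∈ H := Subgroup.subset_closure (by simp)
  have hnegH : (-1 : (ZMod d)ˣ) ∈ H := Subgroup.subset_closure (by simp)
  have hcardG : Nat.card (ZMod d)ˣ = d - 1 := by
    rw [Nat.card_eq_fintype_card]; exact ZMod.card_units d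
  have hκdvd : orderOf κu ∣ Nat.card H := by
    have : orderOf (⟨κu, hκH⟩ : H) ∣ Nat.card H := by
      rw [Nat.card_eq_fintype_card]; exact orderOf_dvd_card
    rwa [← Subgroup.orderOf_coe] at this
  have hdvd : (d - 1) ∣ Nat.card H := by
    rcases horder with h1 | ⟨h4, h2⟩
    · rwa [h1] at hκdvd
    · have hnegdvd : (2 : ℕ) ∣ Nat.card H := by
        have ho2 : orderOf ((-1 : (ZMod d)ˣ)) = 2 := by
          apply orderOf_eq_prime
          · rw [neg_one_sq]
          · intro h
            have := congrArg (Units.val) h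
            simp only [Units.val_neg, Units.val_one] at this
            have h2 : (2 : ZMod d) = 0 := by linear_combination -this
            have hh : ((2 : ℕ) : ZMod d) = 0 := by exact_mod_cast h2
            rw [ZMod.natCast_eq_zero_iff] at hh
            exact absurd (Nat.le_of_dvd (by norm_num) hh) (by omega)
        have : orderOf (⟨-1, hnegH⟩ : H) ∣ Nat.card H := by
          rw [Nat.card_eq_fintype_card]; exact orderOf_dvd_card
        rwa [← Subgroup.orderOf_coe, ho2] at this
      have hcop : Nat.Coprime 2 ((d - 1) / 2) := by
        rw [Nat.coprime_two_left]
        apply Nat.odd_iff.mpr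
        omega
      have := Nat.Coprime.mul_dvd_of_dvd_of_dvd hcop hnegdvd (h2 ▸ hκdvd)
      have h2d : 2 * ((d - 1) / 2) = d - 1 := by
        rcases hodd with ⟨j, hj⟩; omega
      rwa [h2d] at this
  have hle : Nat.card H ∣ d - 1 := hcardG ▸ Subgroup.card_subgroup_dvd_card H
  have hcard : Nat.card H = Nat.card (ZMod d)ˣ := by
    rw [hcardG]; exact Nat.dvd_antisymm hle hdvd
  exact Subgroup.eq_top_of_card_eq H hcard

lemma inv_all (hp : d.Prime) (hodd : Odd d) (κu : (ZMod d)ˣ)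
    (horder : orderOf κu = d - 1 ∨ (d % 4 = 3 ∧ orderOf κu = (d - 1) / 2))
    (f : ZMod d × ZMod d → α) (hκ : κu ∈ invSub f) (hneg : (-1 : (ZMod d)ˣ) ∈ invSub f) :
    ∀ v : (ZMod d)ˣ, ∀ u l : ZMod d, f (↑v * u, ↑v⁻¹ * l) = f (u, l) := by
  have htop : invSub f = ⊤ := by
    rw [← top_le_iff, ← units_closure_top hp hodd κu horder]
    apply Subgroup.closure_le _ |>.mpr
    intro x hx
    rcases hx with h | h
    · exact h ▸ hκ
    · simp only [Set.mem_singleton_iff] at h; exact h ▸ hneg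
  intro v
  exact mem_invSub.mp (htop ▸ Subgroup.mem_top v)

lemma classify [Fact d.Prime] (f : ZMod d × ZMod d → α)
    (hinv : ∀ v : (ZMod d)ˣ, ∀ u l : ZMod d, f (↑v * u, ↑v⁻¹ * l) = f (u, l)) :
    (∀ u l : ZMod d, u ≠ 0 → f (u, l) = f (1, u * l)) ∧
      (∀ l : ZMod d, l ≠ 0 → f (0, l) = f (0, 1)) := by
  constructor
  · intro u l hu
    have := hinv (Units.mk0 u hu)⁻¹ u l
    simp only [inv_inv] at this
    rw [← this]
    congr 1
    rw [Prod.ext_iff]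
    constructor
    · show ((Units.mk0 u hu)⁻¹ : (ZMod d)ˣ).val * u = 1
      rw [Units.val_inv_eq_inv_val, Units.val_mk0]
      exact inv_mul_cancel₀ hu
    · rfl
  · intro l hl
    have := hinv (Units.mk0 l hl) 0 l
    rw [← this]
    congr 1
    rw [Prod.ext_iff]
    refine ⟨by simp, ?_⟩
    show ((Units.mk0 l hl)⁻¹ : (ZMod d)ˣ).val * l = 1
    rw [Units.val_inv_eq_inv_val, Units.val_mk0]
    exact inv_mul_cancel₀ hl

lemma count_supp [Fact d.Prime] (hd : 3 ≤ d) (f : ZMod d × ZMod d → ℂ)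
    (hinv : ∀ v : (ZMod d)ˣ, ∀ u l : ZMod d, f (↑v * u, ↑v⁻¹ * l) = f (u, l))
    (h0 : f (0, 0) ≠ 0) :
    Nat.card {p : ZMod d × ZMod d // f p ≠ 0} % (d - 1) = 1 := by
  classical
  obtain ⟨h1, h2⟩ := classify f hinv
  have hCT : Nat.card {p : ZMod d × ZMod d // f p ≠ 0}
      = (univ.filter (fun p : ZMod d × ZMod d => f p ≠ 0)).card := by
    rw [Nat.card_eq_fintype_card]; exact Fintype.card_subtype _
  set A := univ.filter (fun p : ZMod d × ZMod d => p.1 ≠ 0 ∧ f p ≠ 0) with hA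
  set B := univ.filter (fun p : ZMod d × ZMod d => p.1 = 0 ∧ p.2 ≠ 0 ∧ f p ≠ 0) with hB
  set C := univ.filter (fun p : ZMod d × ZMod d => p.1 = 0 ∧ p.2 = 0 ∧ f p ≠ 0) with hC
  have hsplit : (univ.filter (fun p : ZMod d × ZMod d => f p ≠ 0)).card
      = A.card + B.card + C.card := by
    rw [← Finset.card_union_of_disjoint, ← Finset.card_union_of_disjoint]
    · congr 1
      ext p
      simp only [hA, hB, hC, Finset.mem_union, Finset.mem_filter, Finset.mem_univ, true_and]
      tauto
    · rw [Finset.disjoint_left]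
      intro p hp hq
      simp only [hA, hB, hC, Finset.mem_union, Finset.mem_filter, Finset.mem_univ, true_and] at hp hq
      tauto
    · rw [Finset.disjoint_left]
      intro p hp hq
      simp only [hA, hB, hC, Finset.mem_filter, Finset.mem_univ, true_and] at hp hq
      tauto
  have hCcard : C.card = 1 := by
    have : C = {((0 : ZMod d), (0 : ZMod d))} := by
      ext p
      simp only [hC, Finset.mem_filter, Finset.mem_univ, true_and, Finset.mem_singleton,
        Prod.ext_iff]
      constructor
      · rintro ⟨ha, hb, _⟩; exact ⟨ha, hb⟩
      · rintro ⟨ha, hb⟩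
        refine ⟨ha, hb, ?_⟩
        rw [show p = ((0:ZMod d), (0:ZMod d)) from Prod.ext ha hb]
        exact h0
    rw [this, Finset.card_singleton]
  have hAu : (univ.erase (0 : ZMod d)).card = d - 1 := by
    rw [Finset.card_erase_of_mem (Finset.mem_univ _), Finset.card_univ, ZMod.card]
  have hAcard : A.card = (d - 1) * (univ.filter (fun cc : ZMod d => f (1, cc) ≠ 0)).card := by
    have hbij : A.card
        = ((univ.erase (0 : ZMod d)) ×ˢ (univ.filter (fun cc : ZMod d => f (1, cc) ≠ 0))).card := by
      apply Finset.card_nbij' (fun p => (p.1, p.1 * p.2)) (fun q => (q.1, q.1⁻¹ * q.2))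
      · intro p hp
        simp only [Finset.mem_coe, hA, Finset.mem_filter, Finset.mem_univ, true_and] at hp
        simp only [Finset.mem_coe, Finset.mem_product, Finset.mem_erase, Finset.mem_univ, true_and,
          Finset.mem_filter, and_true]
        exact ⟨hp.1, by rw [← h1 p.1 p.2 hp.1]; exact hp.2⟩
      · intro q hq
        simp only [Finset.mem_coe, Finset.mem_product, Finset.mem_erase, Finset.mem_univ, true_and,
          Finset.mem_filter, and_true] at hq
        simp only [Finset.mem_coe, hA, Finset.mem_filter, Finset.mem_univ, true_and]
        refine ⟨hq.1, ?_⟩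
        rw [h1 q.1 (q.1⁻¹ * q.2) hq.1, show q.1 * (q.1⁻¹ * q.2) = q.2 by
          rw [← mul_assoc, mul_inv_cancel₀ hq.1, one_mul]]
        exact hq.2
      · intro p hp
        simp only [Finset.mem_coe, hA, Finset.mem_filter, Finset.mem_univ, true_and] at hp
        have : p.1⁻¹ * (p.1 * p.2) = p.2 := by
          rw [← mul_assoc, inv_mul_cancel₀ hp.1, one_mul]
        exact Prod.ext rfl this
      · intro q hq
        simp only [Finset.mem_coe, Finset.mem_product, Finset.mem_erase, Finset.mem_univ, true_and,
          Finset.mem_filter, and_true] at hq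
        have : q.1 * (q.1⁻¹ * q.2) = q.2 := by
          rw [← mul_assoc, mul_inv_cancel₀ hq.1, one_mul]
        exact Prod.ext rfl this
    rw [hbij, Finset.card_product, hAu]
  have hBcard : B.card = 0 ∨ B.card = d - 1 := by
    by_cases hf01 : f (0, 1) ≠ 0
    · right
      have : B = ({(0 : ZMod d)} : Finset (ZMod d)) ×ˢ (univ.erase (0 : ZMod d)) := by
        ext p
        simp only [hB, Finset.mem_filter, Finset.mem_univ, true_and, Finset.mem_product,
          Finset.mem_singleton, Finset.mem_erase, and_true]
        constructor
        · rintro ⟨ha, hb, _⟩; exact ⟨ha, hb⟩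
        · rintro ⟨ha, hb⟩
          refine ⟨ha, hb, ?_⟩
          have : f p = f (0, 1) := by
            rw [show p = (p.1, p.2) from rfl, ha]
            exact h2 p.2 hb
          rw [this]; exact hf01
      rw [this, Finset.card_product, Finset.card_singleton, hAu, one_mul]
    · left
      push_neg at hf01
      rw [Finset.card_eq_zero]
      ext p
      simp only [hB, Finset.mem_filter, Finset.mem_univ, true_and, Finset.notMem_empty,
        iff_false]
      rintro ⟨ha, hb, hc⟩
      apply hc
      have : f p = f (0, 1) := by
        rw [show p = (p.1, p.2) from rfl, ha]
        exact h2 p.2 hb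
      rw [this, hf01]
  rcases hBcard with hB0 | hB1
  · rw [hCT, hsplit, hAcard, hB0, hCcard]
    have : (d - 1) * (univ.filter (fun cc : ZMod d => f (1, cc) ≠ 0)).card + 0 + 1
        = (d-1) * (univ.filter (fun cc : ZMod d => f (1, cc) ≠ 0)).card + 1 := by ring
    rw [this, Nat.mul_add_mod]
    exact Nat.mod_eq_of_lt (by omega)
  · rw [hCT, hsplit, hAcard, hB1, hCcard]
    have : (d - 1) * (univ.filter (fun cc : ZMod d => f (1, cc) ≠ 0)).card + (d - 1) + 1
        = (d-1) * ((univ.filter (fun cc : ZMod d => f (1, cc) ≠ 0)).card + 1) + 1 := by ring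
    rw [this, Nat.mul_add_mod]
    exact Nat.mod_eq_of_lt (by omega)

/-! ### Fourier diagonalization of the Gram matrix -/

open Matrix

def Hf (d : ℕ) [NeZero d] (g : ZMod d → ℂ) (s : ZMod d × ZMod d) : ℂ :=
  ((‖Sf d g s.1 s.2‖ ^ 2 : ℝ) : ℂ)

def hhat (d : ℕ) [NeZero d] (g : ZMod d → ℂ) (χ : ZMod d × ZMod d) : ℂ :=
  ∑ s : ZMod d × ZMod d, Hf d g s * eef d (s.1 * χ.1 + s.2 * χ.2)

def FU (d : ℕ) [NeZero d] : Matrix (ZMod d × ZMod d) (ZMod d × ZMod d) ℂ :=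
  fun p χ => eef d (p.1 * χ.1 + p.2 * χ.2)

lemma sum_ee_left (x : ZMod d) : ∑ n : ZMod d, eef d (x * n) = if x = 0 then (d:ℂ) else 0 := by
  rw [← sum_ee x]
  exact Finset.sum_congr rfl fun n _ => by rw [mul_comm]

lemma sum_ee2 (v : ZMod d × ZMod d) :
    ∑ χ : ZMod d × ZMod d, eef d (v.1 * χ.1 + v.2 * χ.2)
      = if v = 0 then ((d:ℂ))^2 else 0 := by
  rw [Fintype.sum_prod_type]
  have : ∀ x : ZMod d, ∑ y : ZMod d, eef d (v.1 * x + v.2 * y)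
      = eef d (v.1 * x) * ∑ y : ZMod d, eef d (v.2 * y) := by
    intro x
    rw [Finset.mul_sum]
    exact Finset.sum_congr rfl fun y _ => by rw [ee_add]
  rw [Finset.sum_congr rfl fun x _ => this x, ← Finset.sum_mul, sum_ee_left, sum_ee_left]
  by_cases h1 : v.1 = 0 <;> by_cases h2 : v.2 = 0 <;>
    simp [h1, h2, Prod.ext_iff, sq]

lemma Gmat_eq_Hf (g : ZMod d → ℂ) (p q : ZMod d × ZMod d) :
    Gmat d g p q = Hf d g (q - p) := by
  rw [Gmat, inn_modT]
  simp [Hf, abs_ee, Prod.fst_sub, Prod.snd_sub, _root_.map_mul]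

lemma eecomb (x y z : ZMod d) : eef d x * eef d y * eef d z = eef d (x + y + z) := by
  rw [ee_add, ee_add]

lemma FU_mul_conjT :
    FU d * (FU d)ᴴ = ((d:ℂ)^2) • (1 : Matrix (ZMod d × ZMod d) (ZMod d × ZMod d) ℂ) := by
  ext p q
  rw [Matrix.mul_apply]
  have hterm : ∀ χ : ZMod d × ZMod d, FU d p χ * (FU d)ᴴ χ q
      = eef d ((p.1 - q.1) * χ.1 + (p.2 - q.2) * χ.2) := by
    intro χ
    rw [Matrix.conjTranspose_apply, FU, FU, star_ee,
      show (-(q.1 * χ.1 + q.2 * χ.2) : ZMod d) = (-(q.1*χ.1)) + (-(q.2*χ.2)) by ring,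
      show ((p.1 - q.1) * χ.1 + (p.2 - q.2) * χ.2 : ZMod d)
        = (p.1 * χ.1 + p.2 * χ.2) + ((-(q.1*χ.1)) + (-(q.2*χ.2))) by ring]
    simp only [ee_add]
  rw [Finset.sum_congr rfl fun χ _ => hterm χ]
  have hse := sum_ee2 (d := d) (p - q)
  rw [Prod.fst_sub, Prod.snd_sub] at hse
  rw [hse]
  by_cases h : p = q
  · simp [h, Matrix.one_apply]
  · have : ¬ (p - q = 0) := fun hc => h (by rwa [sub_eq_zero] at hc)
    simp [this, Matrix.one_apply, h]

lemma Gmat_diag (g : ZMod d → ℂ) :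
    Gmat d g = FU d * Matrix.diagonal (fun χ => hhat d g χ / (d:ℂ)^2) * (FU d)ᴴ := by
  have hdne : (d:ℂ) ≠ 0 := Nat.cast_ne_zero.mpr (NeZero.ne d)
  have hd2 : ((d:ℂ))^2 ≠ 0 := pow_ne_zero 2 hdne
  ext p q
  rw [Gmat_eq_Hf, Matrix.mul_apply]
  have h1 : ∀ χ, (FU d * Matrix.diagonal (fun χ => hhat d g χ / (d:ℂ)^2)) p χ * (FU d)ᴴ χ q
      = ∑ s : ZMod d × ZMod d, (Hf d g s / (d:ℂ)^2)
          * eef d ((s.1 + p.1 - q.1) * χ.1 + (s.2 + p.2 - q.2) * χ.2) := by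
    intro χ
    rw [Matrix.mul_diagonal, Matrix.conjTranspose_apply, FU, FU, star_ee, hhat,
      Finset.sum_div, Finset.mul_sum, Finset.sum_mul]
    apply Finset.sum_congr rfl
    intro ss _
    have hc : eef d (ss.1*χ.1+ss.2*χ.2) * eef d (p.1*χ.1+p.2*χ.2) * eef d (-(q.1*χ.1+q.2*χ.2))
        = eef d ((ss.1+p.1-q.1)*χ.1+(ss.2+p.2-q.2)*χ.2) := by
      rw [eecomb]; congr 1; ring
    linear_combination (Hf d g ss / (d:ℂ)^2) * hc
  rw [Finset.sum_congr rfl fun χ _ => h1 χ, Finset.sum_comm]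
  have h2 : ∀ ss : ZMod d × ZMod d,
      (∑ χ : ZMod d × ZMod d, (Hf d g ss / (d:ℂ)^2)
        * eef d ((ss.1 + p.1 - q.1) * χ.1 + (ss.2 + p.2 - q.2) * χ.2))
      = if ss = q - p then Hf d g ss else 0 := by
    intro ss
    rw [← Finset.mul_sum]
    rw [sum_ee2 ((ss.1 + p.1 - q.1, ss.2 + p.2 - q.2) : ZMod d × ZMod d)]
    by_cases h : ss = q - p
    · have : ((ss.1 + p.1 - q.1, ss.2 + p.2 - q.2) : ZMod d × ZMod d) = 0 := by
        rw [Prod.ext_iff] at h ⊢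
        obtain ⟨h1', h2'⟩ := h
        constructor
        · show ss.1 + p.1 - q.1 = 0
          rw [h1']; show q.1 - p.1 + p.1 - q.1 = 0; ring
        · show ss.2 + p.2 - q.2 = 0
          rw [h2']; show q.2 - p.2 + p.2 - q.2 = 0; ring
      rw [this, if_pos rfl, if_pos h, div_mul_cancel₀ _ hd2]
    · have : ¬ ((ss.1 + p.1 - q.1, ss.2 + p.2 - q.2) : ZMod d × ZMod d) = 0 := by
        intro hc
        apply h
        rw [Prod.ext_iff] at hc ⊢
        obtain ⟨h1', h2'⟩ := hc
        constructor
        · have : ss.1 + p.1 - q.1 = 0 := h1'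
          show ss.1 = q.1 - p.1
          linear_combination this
        · have : ss.2 + p.2 - q.2 = 0 := h2'
          show ss.2 = q.2 - p.2
          linear_combination this
      rw [if_neg this, if_neg h, mul_zero]
  rw [Finset.sum_congr rfl fun ss _ => h2 ss, Finset.sum_ite_eq' univ (q - p) (Hf d g)]
  simp

lemma rank_Gmat (g : ZMod d → ℂ) :
    (Gmat d g).rank = Nat.card {χ : ZMod d × ZMod d // hhat d g χ ≠ 0} := by
  classical
  have hdne : (d:ℂ) ≠ 0 := Nat.cast_ne_zero.mpr (NeZero.ne d)
  have hd2 : ((d:ℂ))^2 ≠ 0 := pow_ne_zero 2 hdne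
  have hdet : (FU d).det * ((FU d)ᴴ).det = ((d:ℂ)^2)^(Fintype.card (ZMod d × ZMod d)) := by
    rw [← Matrix.det_mul, FU_mul_conjT, Matrix.smul_one_eq_diagonal, Matrix.det_diagonal]
    simp
  have hU : IsUnit (FU d).det := by
    rw [isUnit_iff_ne_zero]
    intro h; rw [h, zero_mul] at hdet
    exact (pow_ne_zero _ hd2) hdet.symm
  have hUH : IsUnit ((FU d)ᴴ).det := by
    rw [isUnit_iff_ne_zero]
    intro h; rw [h, mul_zero] at hdet
    exact (pow_ne_zero _ hd2) hdet.symm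
  rw [Gmat_diag g, Matrix.mul_assoc, Matrix.rank_mul_eq_right_of_isUnit_det _ _ hU,
    Matrix.rank_mul_eq_left_of_isUnit_det _ _ hUH, Matrix.rank_diagonal,
    ← Nat.card_eq_fintype_card]
  apply Nat.card_congr
  apply Equiv.subtypeEquivRight
  intro χ
  rw [div_ne_zero_iff]
  exact ⟨fun h => h.1, fun h => ⟨h, hd2⟩⟩

/-! ### choose-2 cast -/

lemma two_mul_choose2 (n : ℕ) : 2 * n.choose 2 = n * (n - 1) := by
  cases n with
  | zero => norm_num
  | succ m =>
    have hdvd : 2 ∣ (m+1) * m := by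
      rw [mul_comm]; exact (Nat.even_mul_succ_self m).two_dvd
    rw [Nat.succ_sub_one, Nat.choose_two_right, Nat.succ_sub_one, Nat.mul_div_cancel' hdvd]

lemma choose_cast (i : ZMod d) : ((i.val.choose 2 : ℕ) : ZMod d) * 2 = i * (i - 1) := by
  have h := congrArg (Nat.cast : ℕ → ZMod d) (two_mul_choose2 i.val)
  push_cast at h
  by_cases hi : i = 0
  · subst hi
    simp [ZMod.val_zero] at h ⊢
  · have h1 : 1 ≤ i.val := Nat.pos_of_ne_zero (fun hc => hi ((ZMod.val_eq_zero i).mp hc))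
    rw [Nat.cast_sub h1] at h
    push_cast at h
    rw [ZMod.natCast_val, ZMod.cast_id] at h
    linear_combination h

end Stmt15Aux

open Stmt15Aux

/-- let `d` be an odd prime, `κ` coprime to `d` with
`gcd(κ²-1, d) = 1`, such that `κ` generates `(ℤ/dℤ)ˣ` (i.e. has multiplicative
order `d-1`), or `d ≡ 3 mod 4` and `κ` has order `(d-1)/2`. If the unit vector
`g` satisfies `g_{κi} = ω^{a·C(i,2)+b·i+c}·g_i`, then the set of values
`|⟨g, M^k T^ℓ g⟩|` has at most `d+2` elements, and
`rank G(g) ≡ d² mod (d-1)`. -/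
theorem stmt15 (d : ℕ) [NeZero d] (hp : d.Prime) (hodd : Odd d) (κ : ℤ)
    (hκ : IsCoprime κ (d : ℤ)) (hκ2 : IsCoprime (κ ^ 2 - 1) (d : ℤ))
    (horder : orderOf ((κ : ZMod d)) = d - 1 ∨
      (d % 4 = 3 ∧ orderOf ((κ : ZMod d)) = (d - 1) / 2))
    (a b c : ℤ) (g : ZMod d → ℂ)
    (hg : ∑ n : ZMod d, ‖g n‖ ^ 2 = 1)
    (hsym : ∀ i : ZMod d,
      g ((κ : ZMod d) * i) =
        gw d ^ (a * (i.val.choose 2 : ℤ) + b * (i.val : ℤ) + c) * g i) :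
    {x : ℝ | ∃ k l : ZMod d, x = ‖inn d g (modT d k l g)‖}.ncard
        ≤ d + 2 ∧
    (Gmat d g).rank % (d - 1) = d ^ 2 % (d - 1) := by
  classical
  haveI : Fact d.Prime := ⟨hp⟩
  have hd3 : 3 ≤ d := by
    rcases hodd with ⟨j, hj⟩
    have := hp.two_le
    omega
  -- basic nonvanishing facts
  have hcop_ne : ∀ z : ℤ, IsCoprime z (d:ℤ) → (z : ZMod d) ≠ 0 := by
    intro z hz h0
    obtain ⟨m, hm⟩ := (ZMod.intCast_zmod_eq_zero_iff_dvd z d).mp h0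
    obtain ⟨u, v, huv⟩ := hz
    have hdd : (d:ℤ) ∣ 1 := ⟨u*m + v, by rw [← huv, hm]; ring⟩
    have hle := Int.le_of_dvd one_pos hdd
    have : (d:ℕ) ≤ 1 := by exact_mod_cast hle
    omega
  set κc : ZMod d := (κ : ZMod d) with hκc_def
  have hκc : κc ≠ 0 := hcop_ne κ hκ
  have hκ2c : κc^2 - 1 ≠ 0 := by
    intro h0
    apply hcop_ne _ hκ2
    push_cast
    exact h0
  set κu : (ZMod d)ˣ := (isUnit_iff_ne_zero.mpr hκc).unit with hκu_def
  have hκu_val : (κu : ZMod d) = κc := IsUnit.unit_spec _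
  have horderu : orderOf κu = d - 1 ∨ (d % 4 = 3 ∧ orderOf κu = (d - 1) / 2) := by
    rw [← hκu_val, orderOf_units] at horder
    exact horder
  have h2ne : (2 : ZMod d) ≠ 0 := by
    intro h
    have hh : ((2:ℕ) : ZMod d) = 0 := by exact_mod_cast h
    rw [ZMod.natCast_eq_zero_iff] at hh
    have := Nat.le_of_dvd (by norm_num) hh
    omega
  set h2 : ZMod d := (2:ZMod d)⁻¹ with hh2_def
  have h2h : h2 * 2 = 1 := inv_mul_cancel₀ h2ne
  have hκinv : κc⁻¹ * κc = 1 := inv_mul_cancel₀ hκc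
  have hκinv' : κc * κc⁻¹ = 1 := mul_inv_cancel₀ hκc
  -- the symmetry hypothesis in ZMod form
  have hq : ∀ i : ZMod d,
      g (κc * i) = eef d (h2 * (a:ZMod d) * i * (i-1) + (b:ZMod d) * i + (c:ZMod d)) * g i := by
    intro i
    rw [hsym i, gw_zpow]
    have harg : (((a * (i.val.choose 2 : ℤ) + b * (i.val:ℤ) + c : ℤ)) : ZMod d)
        = h2 * (a:ZMod d) * i * (i-1) + (b:ZMod d) * i + (c:ZMod d) := by
      push_cast
      rw [ZMod.natCast_val, ZMod.cast_id]
      have hch := choose_cast (d:=d) i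
      linear_combination (h2*(a:ZMod d))*hch - ((a:ZMod d)*((i.val.choose 2 : ℕ):ZMod d))*h2h
    rw [harg]
  have habs := Sf_sym g κc (a:ZMod d) (b:ZMod d) (c:ZMod d) h2 hκc h2h hq
  set tc : ZMod d := (a:ZMod d) / (κc^2 - 1) with htc_def
  have htc : tc * (κc^2 - 1) = (a:ZMod d) := div_mul_cancel₀ _ hκ2c
  have hkey : tc * κc^2 = tc + (a:ZMod d) := by linear_combination htc
  -- Part 1: value-set bound
  have hpart1 : {x : ℝ | ∃ k l : ZMod d,
      x = ‖inn d g (modT d k l g)‖}.ncard ≤ d + 2 := by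
    set Af : ZMod d × ZMod d → ℝ :=
      fun p => ‖Sf d g (p.1 + tc*p.2) p.2‖ with hAf
    have hκmemA : κu ∈ invSub Af := by
      rw [mem_invSub]
      intro u l
      rw [Units.val_inv_eq_inv_val, hκu_val]
      show ‖Sf d g (κc*u + tc*(κc⁻¹*l)) (κc⁻¹*l)‖
          = ‖Sf d g (u + tc*l) l‖
      have hth := habs (u + tc*l) (κc⁻¹*l)
      rw [show κc * (κc⁻¹ * l) = l by rw [← mul_assoc, hκinv', one_mul]] at hth
      rw [show κc*u + tc*(κc⁻¹*l) = κc*(u + tc*l) - (a:ZMod d)*(κc⁻¹*l) by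
        linear_combination (tc*κc*l)*hκinv - (κc⁻¹*l)*hkey]
      exact hth.symm
    have hnegmemA : (-1 : (ZMod d)ˣ) ∈ invSub Af := by
      rw [mem_invSub]
      intro u l
      simp only [inv_neg, inv_one, Units.val_neg, Units.val_one, neg_one_mul]
      show ‖Sf d g (-u + tc*(-l)) (-l)‖ = ‖Sf d g (u + tc*l) l‖
      rw [show -u + tc*(-l) = -(u + tc*l) by ring]
      exact Sf_neg g (u + tc*l) l
    have hinvA := inv_all hp hodd κu horderu Af hκmemA hnegmemA
    obtain ⟨hA1, hA2⟩ := classify Af hinvA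
    set Ab : (ZMod d ⊕ Fin 2) → ℝ :=
      Sum.elim (fun v => Af (1, v)) (fun j => if j = 0 then Af (0,1) else Af (0,0)) with hAb
    have hsub : {x : ℝ | ∃ k l : ZMod d, x = ‖inn d g (modT d k l g)‖}
        ⊆ Set.range Ab := by
      rintro x ⟨k, l, rfl⟩
      rw [inn_g_modT]
      have hx : ‖Sf d g k l‖ = Af (k - tc*l, l) := by
        show _ = ‖Sf d g ((k - tc*l) + tc*l) l‖
        rw [show (k - tc*l) + tc*l = k by ring]
      by_cases hu : k - tc*l = 0
      · by_cases hl : l = 0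
        · refine ⟨Sum.inr 1, ?_⟩
          have : Af (k - tc*l, l) = Af (0, 0) := by rw [hu, hl]
          simp only [hAb, Sum.elim_inr]
          rw [if_neg (by decide : (1 : Fin 2) ≠ 0), ← this, ← hx]
        · refine ⟨Sum.inr 0, ?_⟩
          have h01 : Af (k - tc*l, l) = Af (0, l) := by rw [hu]
          have h02 : Af (0, l) = Af (0, 1) := hA2 l hl
          simp only [hAb, Sum.elim_inr]
          rw [if_pos trivial, ← h02, ← h01, ← hx]
      · refine ⟨Sum.inl ((k - tc*l) * l), ?_⟩
        have h01 : Af (k - tc*l, l) = Af (1, (k - tc*l)*l) := hA1 (k - tc*l) l hu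
        simp only [hAb, Sum.elim_inl]
        rw [← h01, ← hx]
    have hfin : (Set.range Ab).Finite := Set.finite_range _
    refine le_trans (Set.ncard_le_ncard hsub hfin) ?_
    rw [← Set.image_univ]
    refine le_trans (Set.ncard_image_le Set.finite_univ) ?_
    rw [Set.ncard_univ]
    simp [Nat.card_eq_fintype_card, ZMod.card]
  refine ⟨hpart1, ?_⟩
  -- Part 2: the rank congruence
  -- invariance of the Fourier transform of the ambiguity function
  have hRfun : ∀ s : ZMod d × ZMod d,
      Hf d g (κc*s.1 - (a:ZMod d)*(κc⁻¹*s.2), κc⁻¹*s.2) = Hf d g s := by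
    intro s
    have hth := habs s.1 (κc⁻¹ * s.2)
    rw [show κc * (κc⁻¹ * s.2) = s.2 by rw [← mul_assoc, hκinv', one_mul]] at hth
    simp only [Hf]
    rw [← hth]
  have hhat_R : ∀ χ : ZMod d × ZMod d,
      hhat d g (κc * χ.1, κc⁻¹ * (χ.2 - (a:ZMod d) * χ.1)) = hhat d g χ := by
    intro χ
    rw [hhat, hhat]
    refine Finset.sum_nbij'
      (fun s : ZMod d × ZMod d => (κc*s.1 - (a:ZMod d)*(κc⁻¹*s.2), κc⁻¹*s.2))
      (fun y : ZMod d × ZMod d => (κc⁻¹*(y.1 + (a:ZMod d)*y.2), κc*y.2))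
      (fun s _ => Finset.mem_univ _) (fun y _ => Finset.mem_univ _) ?_ ?_ ?_
    · intro s _
      apply Prod.ext
      · show κc⁻¹*((κc*s.1 - (a:ZMod d)*(κc⁻¹*s.2)) + (a:ZMod d)*(κc⁻¹*s.2)) = s.1
        field_simp
        ring
      · show κc*(κc⁻¹*s.2) = s.2
        rw [← mul_assoc, hκinv', one_mul]
    · intro y _
      apply Prod.ext
      · show κc*(κc⁻¹*(y.1+(a:ZMod d)*y.2)) - (a:ZMod d)*(κc⁻¹*(κc*y.2)) = y.1
        field_simp
        ring
      · show κc⁻¹*(κc*y.2) = y.2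
        rw [← mul_assoc, hκinv, one_mul]
    · intro s _
      rw [hRfun s]
      congr 1
      congr 1
      ring
  have hhat_neg : ∀ χ : ZMod d × ZMod d, hhat d g (-χ.1, -χ.2) = hhat d g χ := by
    intro χ
    rw [hhat, hhat]
    refine Finset.sum_nbij'
      (fun s : ZMod d × ZMod d => (-s.1, -s.2))
      (fun s : ZMod d × ZMod d => (-s.1, -s.2))
      (fun s _ => Finset.mem_univ _) (fun y _ => Finset.mem_univ _) ?_ ?_ ?_
    · intro s _; apply Prod.ext <;> simp
    · intro s _; apply Prod.ext <;> simp
    · intro s _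
      have hHneg : Hf d g (-s.1, -s.2) = Hf d g s := by
        simp only [Hf]
        rw [Sf_neg]
      rw [hHneg]
      congr 1
      congr 1
      ring
  set f2 : ZMod d × ZMod d → ℂ := fun p => hhat d g (p.1, p.2 - tc * p.1) with hf2
  have hκmem : κu ∈ invSub f2 := by
    rw [mem_invSub]
    intro u l
    rw [Units.val_inv_eq_inv_val, hκu_val]
    show hhat d g (κc * u, κc⁻¹ * l - tc * (κc * u)) = hhat d g (u, l - tc * u)
    have hth := hhat_R (u, l - tc*u)
    simp only at hth
    rw [← hth]
    congr 2
    linear_combination (tc*κc*u)*hκinv - (κc⁻¹*u)*hkey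
  have hnegmem : (-1 : (ZMod d)ˣ) ∈ invSub f2 := by
    rw [mem_invSub]
    intro u l
    simp only [inv_neg, inv_one, Units.val_neg, Units.val_one, neg_one_mul]
    show hhat d g (-u, -l - tc * (-u)) = hhat d g (u, l - tc * u)
    have hth := hhat_neg (u, l - tc*u)
    simp only at hth
    rw [← hth]
    congr 2
    ring
  have hinv2 := inv_all hp hodd κu horderu f2 hκmem hnegmem
  -- nonvanishing at 0
  have hSf00 : Sf d g 0 0 = 1 := by
    rw [Sf]
    have hterm : ∀ n : ZMod d, eef d (-(0*n)) * g n * (starRingEnd ℂ) (g (n - 0))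
        = ((‖g n‖^2 : ℝ) : ℂ) := by
      intro n
      rw [zero_mul, neg_zero, ee_zero, one_mul, sub_zero, Complex.mul_conj, Complex.sq_norm]
    rw [Finset.sum_congr rfl fun n _ => hterm n, ← Complex.ofReal_sum, hg]
    norm_num
  have hf20 : f2 (0, 0) ≠ 0 := by
    show hhat d g (0, 0 - tc * 0) ≠ 0
    rw [show (0 : ZMod d) - tc * 0 = 0 by ring, hhat]
    have hterm : ∀ s : ZMod d × ZMod d,
        Hf d g s * eef d (s.1*(0:ZMod d) + s.2*(0:ZMod d))
          = ((‖Sf d g s.1 s.2‖^2 : ℝ) : ℂ) := by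
      intro s
      rw [mul_zero, mul_zero, add_zero, ee_zero, mul_one]
      rfl
    rw [Finset.sum_congr rfl fun s _ => hterm s, ← Complex.ofReal_sum, Complex.ofReal_ne_zero]
    have hpos : (1:ℝ) ≤ ∑ s : ZMod d × ZMod d, ‖Sf d g s.1 s.2‖^2 := by
      have hle := Finset.single_le_sum
        (f := fun s : ZMod d × ZMod d => ‖Sf d g s.1 s.2‖^2)
        (fun s _ => by positivity) (Finset.mem_univ ((0,0) : ZMod d × ZMod d))
      calc (1:ℝ) = ‖Sf d g 0 0‖^2 := by rw [hSf00]; norm_num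
        _ ≤ _ := hle
    intro hc
    rw [hc] at hpos
    linarith
  have hcount := count_supp hd3 f2 hinv2 hf20
  have hrk := rank_Gmat (d:=d) g
  have hcardeq : Nat.card {χ : ZMod d × ZMod d // hhat d g χ ≠ 0}
      = Nat.card {p : ZMod d × ZMod d // f2 p ≠ 0} := by
    apply Nat.card_congr
    refine Equiv.subtypeEquiv
      (⟨fun χ : ZMod d × ZMod d => (χ.1, χ.2 + tc*χ.1),
        fun p : ZMod d × ZMod d => (p.1, p.2 - tc*p.1),
        fun χ => Prod.ext rfl (by simp),
        fun p => Prod.ext rfl (by simp)⟩ : (ZMod d × ZMod d) ≃ (ZMod d × ZMod d)) ?_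
    intro χ
    show hhat d g χ ≠ 0 ↔ hhat d g (χ.1, χ.2 + tc*χ.1 - tc*χ.1) ≠ 0
    rw [show χ.2 + tc*χ.1 - tc*χ.1 = χ.2 by ring]
  have hd2mod : d ^ 2 % (d - 1) = 1 := by
    obtain ⟨m, rfl⟩ : ∃ m, d = m + 3 := ⟨d - 3, by omega⟩
    have hident : (m+3)^2 = (m+2)*(m+4) + 1 := by ring
    have hsub : (m+3) - 1 = m + 2 := by omega
    rw [hsub, hident, Nat.mul_add_mod]
    exact Nat.mod_eq_of_lt (by omega)
  rw [hrk, hcardeq, hd2mod, hcount]
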